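/- Let T₄(x) be the number of integers n ≤ x with n ≡ 2 (mod 4) such that φ^{-1}(n) has exactly 4 elements. Then T₄(x) = o(√x) as x → ∞. -/

import Mathlib

open Filter Nat Asymptotics


lemma four_dvd_totient {m p q : ℕ} (hp : p.Prime) (hq : q.Prime) (hpq : p ≠ q)
    (hop : Odd p) (hoq : Odd q) (hpm : p ∣ m) (hqm : q ∣ m) : 4 ∣ Nat.totient m := by
  have hco : Nat.Coprime p q := (Nat.coprime_primes hp hq).mpr hpq
  have hd : Nat.totient (p * q) ∣ Nat.totient m :=
    Nat.totient_dvd_of_dvd (hco.mul_dvd_of_dvd_of_dvd hpm hqm)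
  rw [Nat.totient_mul hco, Nat.totient_prime hp, Nat.totient_prime hq] at hd
  have h2p : 2 ∣ p - 1 := (Nat.Odd.sub_odd hop odd_one).two_dvd
  have h2q : 2 ∣ q - 1 := (Nat.Odd.sub_odd hoq odd_one).two_dvd
  exact dvd_trans (by simpa using mul_dvd_mul h2p h2q) hd

lemma odd_case {n m : ℕ} (h2 : n % 4 = 2) (hm : Odd m) (hφ : Nat.totient m = n) :
    ∃ p a, p.Prime ∧ Odd p ∧ 1 ≤ a ∧ p ^ a = m := by
  have hm1 : m ≠ 1 := by rintro rfl; simp [Nat.totient_one] at hφ; omega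
  have hm0 : m ≠ 0 := by rintro rfl; simp [Nat.odd_iff] at hm
  have hodd : ∀ p ∈ m.primeFactors, Odd p := by
    intro p hp
    rcases Nat.Prime.eq_two_or_odd' (Nat.prime_of_mem_primeFactors hp) with h | h
    · exfalso
      have := Nat.dvd_of_mem_primeFactors hp
      rw [h] at this
      exact (Nat.not_even_iff_odd.mpr hm) (even_iff_two_dvd.mpr this)
    · exact h
  have hcard : m.primeFactors.card = 1 := by
    have hpos : 0 < m.primeFactors.card := by
      rw [Finset.card_pos]
      exact Nat.nonempty_primeFactors.mpr (by omega)
    by_contra hc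
    have h2le : 1 < m.primeFactors.card := by omega
    obtain ⟨p, hp, q, hq, hpq⟩ := Finset.one_lt_card.mp h2le
    have : 4 ∣ n := hφ ▸ four_dvd_totient (Nat.prime_of_mem_primeFactors hp)
      (Nat.prime_of_mem_primeFactors hq) hpq (hodd p hp) (hodd q hq)
      (Nat.dvd_of_mem_primeFactors hp) (Nat.dvd_of_mem_primeFactors hq)
    omega
  obtain ⟨p, a, hp, ha, rfl⟩ := isPrimePow_iff_card_primeFactors_eq_one.mpr hcard
  have hp' : p.Prime := hp.nat_prime
  refine ⟨p, a, hp', hodd p ?_, ha, rfl⟩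
  rw [Nat.mem_primeFactors]
  exact ⟨hp', dvd_pow_self p (by omega), hm0⟩

lemma even_case {n m : ℕ} (h2 : n % 4 = 2) (hn2 : n ≠ 2) (hm : ¬ Odd m) (hφ : Nat.totient m = n) :
    ∃ o, Odd o ∧ Nat.totient o = n ∧ m = 2 * o := by
  have hm0 : m ≠ 0 := by rintro rfl; simp [Nat.totient_zero] at hφ; omega
  have h2m : 2 ∣ m := by
    rcases Nat.even_or_odd m with h | h
    · exact h.two_dvd
    · exact absurd h hm
  set e := m.factorization 2 with he
  set o := m / 2 ^ e with ho
  have hmeo : 2 ^ e * o = m := Nat.ordProj_mul_ordCompl_eq_self m 2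
  have hoodd : Odd o := by
    have h1 : ¬ (2 ∣ o) := Nat.not_dvd_ordCompl Nat.prime_two hm0
    rw [Nat.odd_iff]; omega
  have he1 : 1 ≤ e := Nat.Prime.factorization_pos_of_dvd Nat.prime_two hm0 h2m
  by_cases he2 : 2 ≤ e
  · exfalso
    by_cases ho1 : o = 1
    · rw [ho1, mul_one] at hmeo
      have hne : n = 2 ^ (e - 1) := by
        rw [← hφ, ← hmeo, Nat.totient_prime_pow Nat.prime_two (by omega)]
        simp
      rcases Nat.lt_or_ge e 3 with h3 | h3
      · have he' : e = 2 := by omega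
        rw [he'] at hne
        norm_num at hne
        omega
      · have : (4 : ℕ) ∣ 2 ^ (e - 1) := by
          have : (2:ℕ) ^ 2 ∣ 2 ^ (e - 1) := pow_dvd_pow 2 (by omega)
          simpa using this
        omega
    · obtain ⟨p, hp, hpo⟩ := Nat.exists_prime_and_dvd ho1
      have hpodd : Odd p := by
        rcases hp.eq_two_or_odd' with h | h
        · exfalso; rw [h] at hpo
          exact (Nat.not_even_iff_odd.mpr hoodd) (even_iff_two_dvd.mpr hpo)
        · exact h
      have hco : Nat.Coprime 4 p := by
        have h1 : Nat.Coprime 2 p := hpodd.coprime_two_left.symm.symm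
        have h1 : Nat.Coprime p 2 := Nat.coprime_two_right.mpr hpodd
        simpa [show (4:ℕ) = 2 ^ 2 by norm_num] using (h1.pow_right 2).symm
      have h4m : (4 : ℕ) ∣ m := by
        have h42 : (4:ℕ) ∣ 2 ^ e := by
          have : (2:ℕ) ^ 2 ∣ 2 ^ e := pow_dvd_pow 2 he2
          simpa using this
        rw [← hmeo]
        exact dvd_mul_of_dvd_left h42 o
      have hom : o ∣ m := Dvd.intro_left (2 ^ e) hmeo
      have hpm : p ∣ m := hpo.trans hom
      have h4pm : 4 * p ∣ m := hco.mul_dvd_of_dvd_of_dvd h4m hpm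
      have hd : Nat.totient (4 * p) ∣ n := hφ ▸ Nat.totient_dvd_of_dvd h4pm
      rw [Nat.totient_mul hco, Nat.totient_prime hp] at hd
      have h4d : (4 : ℕ) ∣ Nat.totient 4 * (p - 1) := by
        have h2p : 2 ∣ p - 1 := (Nat.Odd.sub_odd hpodd odd_one).two_dvd
        have h42 : Nat.totient 4 = 2 := by decide
        rw [h42]
        omega
      have : (4 : ℕ) ∣ n := h4d.trans hd
      omega
  · have he' : e = 1 := by omega
    rw [he', pow_one] at hmeo
    refine ⟨o, hoodd, ?_, by omega⟩
    rw [← hφ, ← hmeo]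
    rw [Nat.totient_mul (Nat.coprime_two_left.mpr hoodd)]
    simp [Nat.totient_two]



lemma classify {n : ℕ} (h2 : n % 4 = 2)
    (h4 : {m : ℕ | Nat.totient m = n}.ncard = 4) :
    ∃ p a, p.Prime ∧ 2 ≤ a ∧ p ^ (a - 1) * (p - 1) = n := by
  by_cases hn2 : n = 2
  · exact ⟨2, 2, Nat.prime_two, le_rfl, by subst hn2; norm_num⟩
  set F := {m : ℕ | Nat.totient m = n} with hF
  have hFfin : F.Finite := Set.finite_of_ncard_ne_zero (by rw [h4]; omega)
  set O := {m : ℕ | m ∈ F ∧ Odd m} with hO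
  have hOsub : O ⊆ F := fun m hm => hm.1
  have hOfin : O.Finite := hFfin.subset hOsub
  have hsplit : F = O ∪ (fun o => 2 * o) '' O := by
    ext m
    constructor
    · intro hmF
      by_cases hmo : Odd m
      · exact Or.inl ⟨hmF, hmo⟩
      · obtain ⟨o, ho1, ho2, ho3⟩ := even_case h2 hn2 hmo hmF
        exact Or.inr ⟨o, ⟨ho2, ho1⟩, ho3.symm⟩
    · rintro (hm | ⟨o, ⟨hoF, hoodd⟩, rfl⟩)
      · exact hm.1
      · show Nat.totient (2 * o) = n
        rw [Nat.totient_mul (Nat.coprime_two_left.mpr hoodd), Nat.totient_two, one_mul]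
        exact hoF
  have hdisj : Disjoint O ((fun o => 2 * o) '' O) := by
    rw [Set.disjoint_left]
    rintro m ⟨_, hmodd⟩ ⟨o, _, rfl⟩
    rw [Nat.odd_iff, Nat.mul_mod_right] at hmodd
    omega
  have hinj : Function.Injective (fun o : ℕ => 2 * o) :=
    fun a b h => by simpa using h
  have hcard : F.ncard = 2 * O.ncard := by
    rw [hsplit, Set.ncard_union_eq hdisj hOfin (hOfin.image _),
      Set.ncard_image_of_injective _ hinj]
    omega
  rw [hF] at hcard
  rw [h4] at hcard
  have hO2 : O.ncard = 2 := by omega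
  obtain ⟨m₁, m₂, hne, hOeq⟩ := Set.ncard_eq_two.mp hO2
  have hm₁ : m₁ ∈ O := by rw [hOeq]; exact Set.mem_insert _ _
  have hm₂ : m₂ ∈ O := by rw [hOeq]; exact Set.mem_insert_of_mem _ rfl
  obtain ⟨p, a, hp, hpodd, ha, hpa⟩ := odd_case h2 hm₁.2 hm₁.1
  obtain ⟨q, b, hq, hqodd, hb, hqb⟩ := odd_case h2 hm₂.2 hm₂.1
  have key : ∀ p a, p.Prime → 2 ≤ a → Nat.totient (p ^ a) = n →
      ∃ p' a', p'.Prime ∧ 2 ≤ a' ∧ p' ^ (a' - 1) * (p' - 1) = n := by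
    intro p a hp ha hφ
    exact ⟨p, a, hp, ha, by rw [← Nat.totient_prime_pow hp (by omega)]; exact hφ⟩
  rcases Nat.lt_or_ge a 2 with ha2 | ha2
  · rcases Nat.lt_or_ge b 2 with hb2 | hb2
    · exfalso
      have ha1 : a = 1 := by omega
      have hb1 : b = 1 := by omega
      rw [ha1, pow_one] at hpa
      rw [hb1, pow_one] at hqb
      have h1 : p - 1 = n := by rw [← Nat.totient_prime hp, hpa]; exact hm₁.1
      have h2' : q - 1 = n := by rw [← Nat.totient_prime hq, hqb]; exact hm₂.1
      have : p = q := by have := hp.two_le; have := hq.two_le; omega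
      exact hne (by rw [← hpa, ← hqb, this])
    · exact key q b hq hb2 (by rw [hqb]; exact hm₂.1)
  · exact key p a hp ha2 (by rw [hpa]; exact hm₁.1)


lemma sum_primes_tendsto :
    Tendsto (fun N : ℕ => ∑ p ∈ N.primesBelow, (1:ℝ)/p) atTop atTop := by
  have h := not_summable_one_div_on_primes
  have hnn : ∀ n : ℕ, 0 ≤ Set.indicator {p : ℕ | p.Prime} (fun n : ℕ => (1:ℝ)/n) n := by
    intro n
    apply Set.indicator_nonneg
    intro i _
    positivity
  have := (not_summable_iff_tendsto_nat_atTop_of_nonneg hnn).mp h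
  convert this using 2 with N
  rw [primesBelow, Finset.sum_filter]
  refine Finset.sum_congr rfl fun p _ => ?_
  by_cases hp : p.Prime <;> simp [hp, Set.indicator_apply]

lemma totient_prod_primes {s : Finset ℕ} (hs : ∀ p ∈ s, p.Prime) :
    Nat.totient (∏ p ∈ s, p) = ∏ p ∈ s, (p - 1) := by
  classical
  induction s using Finset.induction_on with
  | empty => simp
  | @insert q s hq ih =>
    have hqP : q.Prime := hs q (Finset.mem_insert_self q s)
    have hs' : ∀ p ∈ s, p.Prime := fun p hp => hs p (Finset.mem_insert_of_mem hp)
    have hco : Nat.Coprime q (∏ p ∈ s, p) := by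
      apply Nat.Coprime.prod_right
      intro p hp
      exact (Nat.coprime_primes hqP (hs' p hp)).mpr (by rintro rfl; exact hq hp)
    rw [Finset.prod_insert hq, Finset.prod_insert hq, Nat.totient_mul hco,
      Nat.totient_prime hqP, ih hs']

lemma ratio_eq (k : ℕ) :
    (Nat.totient (∏ p ∈ k.primesBelow, p) : ℝ) =
      (∏ p ∈ k.primesBelow, (p:ℝ)) * ∏ p ∈ k.primesBelow, (1 - 1/(p:ℝ)) := by
  rw [totient_prod_primes (fun p hp => prime_of_mem_primesBelow hp)]
  rw [← Finset.prod_mul_distrib]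
  push_cast [Nat.cast_prod]
  refine Finset.prod_congr rfl fun p hp => ?_
  have h2 : 2 ≤ p := (prime_of_mem_primesBelow hp).two_le
  have hp0 : (0:ℝ) < p := by positivity
  rw [Nat.cast_sub (by omega)]
  field_simp
  norm_num

lemma factor_nonneg {p : ℕ} (hp : 2 ≤ p) : (0:ℝ) ≤ 1 - 1/(p:ℝ) := by
  have : (1:ℝ)/p ≤ 1/2 := by
    apply one_div_le_one_div_of_le <;> norm_num
    exact_mod_cast hp
  linarith

lemma r_nonneg (k : ℕ) : 0 ≤ ∏ p ∈ k.primesBelow, (1 - 1/(p:ℝ)) := by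
  apply Finset.prod_nonneg
  exact fun p hp => factor_nonneg (prime_of_mem_primesBelow hp).two_le

lemma r_tendsto : Tendsto (fun k : ℕ => ∏ p ∈ k.primesBelow, (1 - 1/(p:ℝ))) atTop (nhds 0) := by
  have hub : ∀ k : ℕ, ∏ p ∈ k.primesBelow, (1 - 1/(p:ℝ)) ≤
      Real.exp (-(∑ p ∈ k.primesBelow, (1:ℝ)/p)) := by
    intro k
    calc ∏ p ∈ k.primesBelow, (1 - 1/(p:ℝ))
        ≤ ∏ p ∈ k.primesBelow, Real.exp (-(1/(p:ℝ))) := by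
          apply Finset.prod_le_prod
          · exact fun p hp => factor_nonneg (prime_of_mem_primesBelow hp).two_le
          · intro p hp
            have := Real.add_one_le_exp (-(1/(p:ℝ)))
            linarith
      _ = Real.exp (∑ p ∈ k.primesBelow, -(1/(p:ℝ))) := (Real.exp_sum _ _).symm
      _ = Real.exp (-(∑ p ∈ k.primesBelow, (1:ℝ)/p)) := by rw [Finset.sum_neg_distrib]
  have hexp : Tendsto (fun k : ℕ => Real.exp (-(∑ p ∈ k.primesBelow, (1:ℝ)/p)))
      atTop (nhds 0) :=
    Real.tendsto_exp_atBot.comp (tendsto_neg_atTop_atBot.comp sum_primes_tendsto)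
  exact squeeze_zero r_nonneg hub hexp


lemma pi_div_tendsto_zero :
    Tendsto (fun N : ℕ => (Nat.primeCounting N : ℝ) / N) atTop (nhds 0) := by
  rw [Metric.tendsto_atTop]
  intro ε hε
  -- pick k with r k < ε/2
  obtain ⟨k, hk⟩ := (Metric.tendsto_atTop.mp r_tendsto (ε/2) (by linarith)).imp
    (fun k hk => hk k le_rfl)
  set r : ℝ := ∏ p ∈ k.primesBelow, (1 - 1/(p:ℝ)) with hr
  have hrε : r < ε / 2 := by
    have := hk
    rw [Real.dist_eq, abs_sub_lt_iff] at this
    linarith [this.1]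
  set P : ℕ := ∏ p ∈ k.primesBelow, p with hP
  have hP0 : 0 < P := Finset.prod_pos fun p hp => (prime_of_mem_primesBelow hp).pos
  set C : ℕ := Nat.primeCounting' (P + 1) + Nat.totient P with hC
  have hPr : (Nat.totient P : ℝ) ≤ P * r := by
    rw [hr, hP]
    rw [ratio_eq k]
    push_cast
    rfl
  -- main bound: for N ≥ P, (π N : ℝ) ≤ C + r * N
  have main : ∀ N : ℕ, P ≤ N → (Nat.primeCounting N : ℝ) ≤ C + r * N := by
    intro N hN
    have key : Nat.primeCounting N ≤
        Nat.primeCounting' (P + 1) + Nat.totient P * ((N - P) / P + 1) := by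
      have := Nat.primeCounting'_add_le (a := P) (k := P + 1) hP0.ne' (by omega) (N - P)
      rw [show P + 1 + (N - P) = N + 1 by omega] at this
      exact this
    have h1 : ((N - P) / P : ℕ) ≤ N / P := Nat.div_le_div_right (by omega)
    have h2 : ((N / P : ℕ) : ℝ) ≤ (N : ℝ) / P := Nat.cast_div_le
    have hPpos : (0:ℝ) < P := by exact_mod_cast hP0
    calc (Nat.primeCounting N : ℝ)
        ≤ Nat.primeCounting' (P + 1) + (Nat.totient P : ℝ) * (((N - P) / P : ℕ) + 1) := by
          exact_mod_cast key
      _ ≤ Nat.primeCounting' (P + 1) + (Nat.totient P : ℝ) * ((N : ℝ) / P + 1) := by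
          have hfle : (((N - P) / P : ℕ) : ℝ) ≤ (N : ℝ) / P := le_trans (by exact_mod_cast h1) h2
          nlinarith [Nat.cast_nonneg (α := ℝ) (Nat.totient P)]
      _ = Nat.primeCounting' (P + 1) + (Nat.totient P : ℝ) / P * N + Nat.totient P := by
          field_simp
          ring
      _ ≤ Nat.primeCounting' (P + 1) + r * N + Nat.totient P := by
          have : (Nat.totient P : ℝ) / P ≤ r := by
            rw [div_le_iff₀ hPpos]
            linarith [hPr]
          nlinarith [Nat.cast_nonneg (α := ℝ) N]
      _ = C + r * N := by rw [hC]; push_cast; ring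
  -- choose N₀
  obtain ⟨N₁, hN₁⟩ := exists_nat_gt ((C : ℝ) / (ε / 2))
  refine ⟨max (max P 1) N₁ + 1, fun N hN => ?_⟩
  have hNP : P ≤ N := by omega
  have hN1 : 1 ≤ N := by omega
  have hNpos : (0:ℝ) < N := by exact_mod_cast hN1
  have hπ : (Nat.primeCounting N : ℝ) ≤ C + r * N := main N hNP
  have hCN : (C : ℝ) / N < ε / 2 := by
    rw [div_lt_iff₀ hNpos]
    have hN₁N : (N₁ : ℝ) < N := by exact_mod_cast (by omega : N₁ < N)
    have hC0 : (0:ℝ) ≤ C := Nat.cast_nonneg C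
    have := hN₁
    rw [div_lt_iff₀ (by linarith : (0:ℝ) < ε/2)] at this
    nlinarith
  rw [Real.dist_eq, sub_zero, abs_of_nonneg (by positivity)]
  have : (Nat.primeCounting N : ℝ) / N ≤ (C : ℝ) / N + r := by
    rw [div_add' _ _ _ (ne_of_gt hNpos), div_le_div_iff₀ hNpos hNpos]
    nlinarith
  have hr0 : 0 ≤ r := r_nonneg k
  linarith


lemma nat_sqrt_tendsto : Tendsto (fun x : ℕ => x.sqrt) atTop atTop := by
  apply tendsto_atTop_atTop.mpr
  intro b
  exact ⟨b * b, fun x hx => Nat.le_sqrt.mpr hx⟩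

lemma nat_sqrt_le_real (x : ℕ) : (x.sqrt : ℝ) ≤ Real.sqrt x := by
  rw [show ((x:ℝ)) = ((x:ℕ):ℝ) from rfl, ← Real.sqrt_sq (by positivity : (0:ℝ) ≤ (x.sqrt:ℝ))]
  apply Real.sqrt_le_sqrt
  have h := Nat.sqrt_le' x
  exact_mod_cast (by nlinarith : Nat.sqrt x ^ 2 ≤ x)

lemma term1 : Tendsto (fun x : ℕ => (Nat.primeCounting (x.sqrt + 1) : ℝ) / Real.sqrt x)
    atTop (nhds 0) := by
  have hcomp : Tendsto (fun x : ℕ => (Nat.primeCounting (x.sqrt + 1) : ℝ) / (x.sqrt + 1))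
      atTop (nhds 0) := by
    have hg : Tendsto (fun x : ℕ => x.sqrt + 1) atTop atTop :=
      tendsto_atTop_mono (fun x => Nat.le_succ _) nat_sqrt_tendsto
    have := pi_div_tendsto_zero.comp hg
    apply this.congr
    intro x
    simp only [Function.comp_apply]
    push_cast
    rfl
  have h2 := hcomp.const_mul (2:ℝ)
  rw [mul_zero] at h2
  apply squeeze_zero' (g := fun x : ℕ => 2 * ((Nat.primeCounting (x.sqrt + 1) : ℝ) / (x.sqrt + 1)))
  · filter_upwards with x; positivity
  · filter_upwards [eventually_ge_atTop 1] with x hx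
    have hy : (0:ℝ) < (x.sqrt : ℝ) + 1 := by positivity
    have hsx : (1:ℝ) ≤ Real.sqrt x := by
      rw [show (1:ℝ) = Real.sqrt 1 by simp]
      exact Real.sqrt_le_sqrt (by exact_mod_cast hx)
    have hle : ((x.sqrt : ℝ) + 1) ≤ 2 * Real.sqrt x := by
      have := nat_sqrt_le_real x
      linarith
    rw [div_le_iff₀ (by linarith : (0:ℝ) < Real.sqrt x)]
    have hπ : (0:ℝ) ≤ (Nat.primeCounting (x.sqrt + 1) : ℝ) := by positivity
    rw [mul_comm (2:ℝ), mul_assoc, div_mul_eq_mul_div, le_div_iff₀ hy]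
    nlinarith
  · exact h2

lemma real_term2 : Tendsto (fun t : ℝ =>
    ((t ^ ((1:ℝ)/3) + 2) * (Real.log t / Real.log 2 + 3)) / t ^ ((1:ℝ)/2))
    atTop (nhds 0) := by
  apply IsLittleO.tendsto_div_nhds_zero
  have h1 : (fun t : ℝ => t ^ ((1:ℝ)/3) + 2) =O[atTop] fun t => t ^ ((1:ℝ)/3) := by
    rw [isBigO_iff]
    refine ⟨3, ?_⟩
    filter_upwards [eventually_ge_atTop (1:ℝ)] with t ht
    have h0 : (1:ℝ) ≤ t ^ ((1:ℝ)/3) := Real.one_le_rpow ht (by norm_num)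
    simp only [Real.norm_eq_abs]
    rw [abs_of_nonneg (by linarith), abs_of_nonneg (by linarith)]
    linarith
  have h2 : (fun t : ℝ => Real.log t / Real.log 2 + 3) =o[atTop] fun t => t ^ ((1:ℝ)/6) := by
    have hlog : (fun t : ℝ => Real.log t) =o[atTop] fun t => t ^ ((1:ℝ)/6) :=
      isLittleO_log_rpow_atTop (by norm_num)
    have hc : (fun _ : ℝ => (3:ℝ)) =o[atTop] fun t => t ^ ((1:ℝ)/6) := by
      apply isLittleO_const_left.mpr
      right
      have := tendsto_rpow_atTop (show (0:ℝ) < 1/6 by norm_num)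
      exact Tendsto.comp (by simpa using tendsto_norm_atTop_atTop) this
    simpa [div_eq_mul_inv, mul_comm] using ((hlog.const_mul_left (Real.log 2)⁻¹).add hc)
  have := h1.mul_isLittleO h2
  apply this.trans_isBigO
  rw [isBigO_iff]
  refine ⟨1, ?_⟩
  filter_upwards [eventually_gt_atTop (0:ℝ)] with t ht
  rw [← Real.rpow_add ht]
  norm_num


lemma term2 : Tendsto (fun x : ℕ =>
    (((⌊((x:ℝ)) ^ ((1:ℝ)/3)⌋₊ + 2) * (Nat.log 2 x + 3) : ℕ) : ℝ) / Real.sqrt x)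
    atTop (nhds 0) := by
  have hg : Tendsto (fun x : ℕ =>
      ((((x:ℝ)) ^ ((1:ℝ)/3) + 2) * (Real.log x / Real.log 2 + 3)) / ((x:ℝ)) ^ ((1:ℝ)/2))
      atTop (nhds 0) := real_term2.comp tendsto_natCast_atTop_atTop
  apply squeeze_zero' _ _ hg
  · filter_upwards with x; positivity
  · filter_upwards [eventually_ge_atTop 1] with x hx
    have hx0 : (0:ℝ) < (x:ℝ) := by exact_mod_cast hx
    rw [Real.sqrt_eq_rpow]
    have hK : ((⌊((x:ℝ)) ^ ((1:ℝ)/3)⌋₊ : ℝ)) ≤ ((x:ℝ)) ^ ((1:ℝ)/3) :=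
      Nat.floor_le (by positivity)
    have hL : ((Nat.log 2 x : ℝ)) ≤ Real.log x / Real.log 2 := by
      have h2x : (2:ℝ) ^ (Nat.log 2 x : ℕ) ≤ (x:ℝ) := by
        exact_mod_cast Nat.pow_log_le_self 2 (by omega)
      have hlog := Real.log_le_log (by positivity) h2x
      rw [Real.log_pow] at hlog
      rw [le_div_iff₀ (Real.log_pos (by norm_num))]
      exact_mod_cast hlog
    push_cast
    gcongr


lemma count_bound (x : ℕ) :
    {n : ℕ | n ≤ x ∧ n % 4 = 2 ∧ {m : ℕ | Nat.totient m = n}.ncard = 4}.ncard ≤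
      Nat.primeCounting (x.sqrt + 1) +
        (⌊((x:ℝ)) ^ ((1:ℝ)/3)⌋₊ + 2) * (Nat.log 2 x + 3) := by
  classical
  set K := ⌊((x:ℝ)) ^ ((1:ℝ)/3)⌋₊ with hK
  set L := Nat.log 2 x with hL
  set A : Finset ℕ := ((x.sqrt + 2).primesBelow).image (fun p => p * (p - 1)) with hA
  set B : Finset ℕ :=
    ((Finset.Iic (K + 1)) ×ˢ (Finset.Iic (L + 2))).image
      (fun q : ℕ × ℕ => q.1 ^ (q.2 - 1) * (q.1 - 1)) with hB
  have hsub : {n : ℕ | n ≤ x ∧ n % 4 = 2 ∧ {m : ℕ | Nat.totient m = n}.ncard = 4}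
      ⊆ ↑(A ∪ B) := by
    rintro n ⟨hnx, h2, h4⟩
    obtain ⟨p, a, hp, ha2, heq⟩ := classify h2 h4
    have hp2 := hp.two_le
    have hn2 : 2 ≤ n := by omega
    have hx2 : 2 ≤ x := by omega
    simp only [Finset.coe_union, Set.mem_union, Finset.mem_coe]
    by_cases ha : a = 2
    · left
      subst ha
      rw [pow_one] at heq
      have hsq : (p - 1) * (p - 1) ≤ x := by
        calc (p - 1) * (p - 1) ≤ p * (p - 1) := Nat.mul_le_mul_right _ (by omega)
          _ = n := heq
          _ ≤ x := hnx
      have hps : p - 1 ≤ x.sqrt := Nat.le_sqrt.mpr hsq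
      rw [hA, Finset.mem_image]
      exact ⟨p, mem_primesBelow.mpr ⟨by omega, hp⟩, heq⟩
    · right
      have ha3 : 3 ≤ a := by omega
      have hcube : (p - 1) ^ 3 ≤ x := by
        have h1 : (p - 1) ^ 2 ≤ p ^ 2 := Nat.pow_le_pow_left (by omega) 2
        have h2' : p ^ 2 ≤ p ^ (a - 1) := Nat.pow_le_pow_right (by omega) (by omega)
        calc (p - 1) ^ 3 = (p - 1) ^ 2 * (p - 1) := by ring
          _ ≤ p ^ (a - 1) * (p - 1) := Nat.mul_le_mul_right _ (h1.trans h2')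
          _ = n := heq
          _ ≤ x := hnx
      have hpK : p - 1 ≤ K := by
        rw [hK]
        apply Nat.le_floor
        have hc : (((p - 1 : ℕ) : ℝ)) ^ (3 : ℕ) ≤ (x : ℝ) := by exact_mod_cast hcube
        have h0 : (0:ℝ) ≤ ((p - 1 : ℕ) : ℝ) := by positivity
        calc ((p - 1 : ℕ) : ℝ) = ((((p - 1 : ℕ) : ℝ)) ^ (3:ℕ)) ^ ((1:ℝ)/3) := by
              rw [← Real.rpow_natCast ((p - 1 : ℕ) : ℝ) 3, ← Real.rpow_mul h0]
              norm_num
          _ ≤ ((x:ℝ)) ^ ((1:ℝ)/3) := Real.rpow_le_rpow (by positivity) hc (by norm_num)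
      have haL : a - 1 ≤ L := by
        rw [hL]
        rw [Nat.le_log_iff_pow_le (by norm_num) (by omega : x ≠ 0)]
        calc 2 ^ (a - 1) ≤ p ^ (a - 1) := Nat.pow_le_pow_left hp2 _
          _ ≤ p ^ (a - 1) * (p - 1) := Nat.le_mul_of_pos_right _ (by omega)
          _ = n := heq
          _ ≤ x := hnx
      rw [hB, Finset.mem_image]
      refine ⟨(p, a), ?_, heq⟩
      rw [Finset.mem_product]
      exact ⟨Finset.mem_Iic.mpr (by omega), Finset.mem_Iic.mpr (by omega)⟩
  calc {n : ℕ | n ≤ x ∧ n % 4 = 2 ∧ {m : ℕ | Nat.totient m = n}.ncard = 4}.ncard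
      ≤ (↑(A ∪ B) : Set ℕ).ncard :=
        Set.ncard_le_ncard hsub (Set.toFinite _)
    _ = (A ∪ B).card := Set.ncard_coe_finset _
    _ ≤ A.card + B.card := Finset.card_union_le _ _
    _ ≤ Nat.primeCounting (x.sqrt + 1) + (K + 2) * (L + 3) := by
        apply Nat.add_le_add
        · calc A.card ≤ ((x.sqrt + 2).primesBelow).card := Finset.card_image_le
            _ = Nat.primeCounting' (x.sqrt + 2) := primesBelow_card_eq_primeCounting' _
            _ = Nat.primeCounting (x.sqrt + 1) := rfl
        · calc B.card ≤ ((Finset.Iic (K + 1)) ×ˢ (Finset.Iic (L + 2))).card :=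
              Finset.card_image_le
            _ = (K + 2) * (L + 3) := by
                rw [Finset.card_product, Nat.card_Iic, Nat.card_Iic]


theorem T4_little_o_sqrt :
    Tendsto
      (fun x : ℕ =>
        (({n : ℕ | n ≤ x ∧ n % 4 = 2 ∧
            {m : ℕ | Nat.totient m = n}.ncard = 4}.ncard : ℝ)) / Real.sqrt x)
      atTop (nhds 0) := by
  have hsum := term1.add term2
  rw [add_zero] at hsum
  apply squeeze_zero' _ _ hsum
  · filter_upwards with x; positivity
  · filter_upwards [eventually_ge_atTop 1] with x hx
    have hb := count_bound x
    have hsx : (0:ℝ) ≤ Real.sqrt x := Real.sqrt_nonneg _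
    rw [← add_div]
    gcongr
    · push_cast
      exact_mod_cast hb
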